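/- Let F be a field of odd characteristic and a, b, b' ∈ F² with d(a,b) = d(a,b') and b ≠ b'. If b − b' is isotropic (i.e. d(b,b') = 0), then d(a,b) = d(a,b') = 0. -/
import Mathlib


theorem isosceles_isotropic_base (F : Type*) [Field F] (hchar : (2 : F) ≠ 0)
    (a b b' : F × F) (hne : b ≠ b')
    (hiso : (b.1 - b'.1) ^ 2 + (b.2 - b'.2) ^ 2 = 0)
    (heq : (a.1 - b.1) ^ 2 + (a.2 - b.2) ^ 2 = (a.1 - b'.1) ^ 2 + (a.2 - b'.2) ^ 2) :
    (a.1 - b.1) ^ 2 + (a.2 - b.2) ^ 2 = 0 ∧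
    (a.1 - b'.1) ^ 2 + (a.2 - b'.2) ^ 2 = 0 := by
  have hu1 : b.1 - b'.1 ≠ 0 := by
    intro h
    have h2 : (b.2 - b'.2) ^ 2 = 0 := by linear_combination hiso - (b.1 - b'.1 + 0) * h
    have h2' : b.2 - b'.2 = 0 := by
      have := pow_eq_zero_iff (n := 2) (by norm_num) |>.mp h2
      exact this
    exact hne (Prod.ext (sub_eq_zero.mp h) (sub_eq_zero.mp h2'))
  have hdot2 : 2 * ((a.1 - b.1) * (b.1 - b'.1) + (a.2 - b.2) * (b.2 - b'.2)) = 0 := by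
    linear_combination -heq - hiso
  have hdot : (a.1 - b.1) * (b.1 - b'.1) + (a.2 - b.2) * (b.2 - b'.2) = 0 :=
    (mul_eq_zero.mp hdot2).resolve_left hchar
  have hkey : ((a.1 - b.1) ^ 2 + (a.2 - b.2) ^ 2) * (b.1 - b'.1) ^ 2 = 0 := by
    linear_combination ((a.1 - b.1) * (b.1 - b'.1) - (a.2 - b.2) * (b.2 - b'.2)) * hdot
      + (a.2 - b.2) ^ 2 * hiso
  have h1 : (a.1 - b.1) ^ 2 + (a.2 - b.2) ^ 2 = 0 :=
    (mul_eq_zero.mp hkey).resolve_right (pow_ne_zero 2 hu1)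
  exact ⟨h1, by rw [← heq]; exact h1⟩
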